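/- For every m×n sign pattern matrix A with minimum rank n-2, there exists a rational matrix in the qualitative class Q(A) whose rank equals n-2. -/

import Mathlib

open Matrix

noncomputable section

def signVec {n : ℕ} (x : Fin n → ℝ) : Fin n → SignType := fun i => SignType.sign (x i)

def signSet {n : ℕ} (L : Submodule ℝ (Fin n → ℝ)) : Set (Fin n → SignType) :=
  signVec '' (L : Set (Fin n → ℝ))

def IsRationalVec {n : ℕ} (v : Fin n → ℝ) : Prop := ∀ i, ∃ q : ℚ, v i = (q : ℝ)

def IsRationalSubspace {n : ℕ} (K : Submodule ℝ (Fin n → ℝ)) : Prop :=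
  ∃ s : Set (Fin n → ℝ), (∀ v ∈ s, IsRationalVec v) ∧ Submodule.span ℝ s = K

def IsRationalMatrix {m n : ℕ} (B : Matrix (Fin m) (Fin n) ℝ) : Prop :=
  ∀ i j, ∃ q : ℚ, B i j = (q : ℝ)

def mr {m n : ℕ} (A : Matrix (Fin m) (Fin n) SignType) : ℕ :=
  sInf {r | ∃ B : Matrix (Fin m) (Fin n) ℝ, (∀ i j, SignType.sign (B i j) = A i j) ∧ B.rank = r}

def SignPerp {n : ℕ} (c x : Fin n → SignType) : Prop :=
  (∀ i, c i = 0 ∨ x i = 0) ∨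
  (∃ i j, c i = x i ∧ c i ≠ 0 ∧ c j = -(x j) ∧ c j ≠ 0)
namespace SP

variable {α : Type*}

section ring
variable [CommRing α] [LinearOrder α] [IsStrictOrderedRing α]

def det2 (u v : α × α) : α := u.1 * v.2 - u.2 * v.1
def dot2 (u v : α × α) : α := u.1 * v.1 + u.2 * v.2
def rot2 (u : α × α) : α × α := (-u.2, u.1)

lemma dot2_rot2_left (u v : α × α) : dot2 (rot2 u) v = det2 u v := by
  simp [dot2, det2, rot2]; ring

lemma det2_self (u : α × α) : det2 u u = 0 := by simp [det2]; ring

lemma det2_swap (u v : α × α) : det2 u v = - det2 v u := by simp [det2]; ring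

lemma dot2_comm (u v : α × α) : dot2 u v = dot2 v u := by simp [dot2]; ring

lemma dot2_self_nonneg (u : α × α) : 0 ≤ dot2 u u := by
  have := mul_self_nonneg u.1; have := mul_self_nonneg u.2; simp [dot2]; nlinarith

lemma dot2_self_pos {u : α × α} (h : u ≠ 0) : 0 < dot2 u u := by
  rcases (dot2_self_nonneg u).lt_or_eq with h'|h'
  · exact h'
  · exfalso; apply h
    simp only [dot2] at h'
    have h1 : u.1 = 0 := by nlinarith [mul_self_nonneg u.1, mul_self_nonneg u.2]
    have h2 : u.2 = 0 := by nlinarith [mul_self_nonneg u.1, mul_self_nonneg u.2]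
    exact Prod.ext h1 h2

lemma dot2_self_eq_zero {u : α × α} (h : dot2 u u = 0) : u = 0 := by
  by_contra hu; exact absurd h (dot2_self_pos hu).ne'

lemma det2_smul_left (c : α) (u v : α × α) : det2 (c • u) v = c * det2 u v := by
  simp [det2, Prod.smul_def, smul_eq_mul]; ring

lemma det2_smul_right (c : α) (u v : α × α) : det2 u (c • v) = c * det2 u v := by
  simp [det2, Prod.smul_def, smul_eq_mul]; ring

lemma dot2_smul_left (c : α) (u v : α × α) : dot2 (c • u) v = c * dot2 u v := by
  simp [dot2, Prod.smul_def, smul_eq_mul]; ring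

lemma dot2_smul_right (c : α) (u v : α × α) : dot2 u (c • v) = c * dot2 u v := by
  simp [dot2, Prod.smul_def, smul_eq_mul]; ring


lemma dot2_add_left (u v w : α × α) : dot2 (u + v) w = dot2 u w + dot2 v w := by
  simp [dot2]; ring

lemma det2_add_left (u v w : α × α) : det2 (u + v) w = det2 u w + det2 v w := by
  simp [det2]; ring

lemma dot2_add_right (u v w : α × α) : dot2 u (v + w) = dot2 u v + dot2 u w := by
  simp [dot2]; ring

lemma dot2_zero_right (u : α × α) : dot2 u 0 = 0 := by simp [dot2]

lemma dot2_zero_left (u : α × α) : dot2 0 u = 0 := by simp [dot2]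

lemma det2_zero_right (u : α × α) : det2 u 0 = 0 := by simp [det2]

lemma det2_zero_left (u : α × α) : det2 0 u = 0 := by simp [det2]

lemma rot2_rot2 (u : α × α) : rot2 (rot2 u) = -u := by simp [rot2, Prod.ext_iff]

lemma det2_rot2_rot2 (u v : α × α) : det2 (rot2 u) (rot2 v) = det2 u v := by
  simp [det2, rot2]; ring

lemma dot2_rot2_rot2 (u v : α × α) : dot2 (rot2 u) (rot2 v) = dot2 u v := by
  simp [dot2, rot2]; ring

/-- Cramer identity. -/
lemma cramer2 (x y z : α × α) :
    det2 y z • x - det2 x z • y + det2 x y • z = 0 := by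
  apply Prod.ext <;> simp [det2, Prod.smul_def, smul_eq_mul] <;> ring

/-- E identity. -/
lemma e_ident (a x y : α × α) :
    dot2 a x * det2 a y - dot2 a y * det2 a x = dot2 a a * det2 x y := by
  simp [det2, dot2]; ring

end ring

section field
variable [Field α] [LinearOrder α] [IsStrictOrderedRing α]

lemma perp_rep {a p : α × α} (h : dot2 a p = 0) (hp : p ≠ 0) :
    a = (det2 p a / dot2 p p) • rot2 p := by
  have hpp := (dot2_self_pos hp).ne'
  apply Prod.ext
  · show a.1 = (det2 p a / dot2 p p) * (-p.2)
    field_simp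
    simp only [det2, dot2] at *
    linear_combination p.1 * h
  · show a.2 = (det2 p a / dot2 p p) * p.1
    field_simp
    simp only [det2, dot2] at *
    linear_combination p.2 * h

lemma collin_rep {u v : α × α} (h : det2 u v = 0) (hu : u ≠ 0) :
    v = (dot2 u v / dot2 u u) • u := by
  have hpp := (dot2_self_pos hu).ne'
  apply Prod.ext
  · show v.1 = (dot2 u v / dot2 u u) * u.1
    field_simp
    simp only [det2, dot2] at *
    linear_combination (-u.2) * h
  · show v.2 = (dot2 u v / dot2 u u) * u.2
    field_simp
    simp only [det2, dot2] at *
    linear_combination u.1 * h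

lemma det2_trans {a x y : α × α} (ha : a ≠ 0) (hx : det2 a x = 0) (hy : det2 a y = 0) :
    det2 x y = 0 := by
  rw [collin_rep hx ha, collin_rep hy ha, det2_smul_left, det2_smul_right, det2_self]
  ring

end field


section more
open SignType
variable {α : Type*} [Field α] [LinearOrder α] [IsStrictOrderedRing α]

lemma sgn_div_pos {x y : α} (hy : 0 < y) : SignType.sign (x / y) = SignType.sign x := by
  rcases lt_trichotomy x 0 with h|h|h
  · rw [sign_neg h, sign_neg (div_neg_of_neg_of_pos h hy)]
  · simp [h]
  · rw [sign_pos h, sign_pos (div_pos h hy)]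

lemma sgn_cast_signType (s : SignType) : SignType.sign ((s : α)) = s := by
  cases s <;> simp

lemma sgn_eq_of_mul_pos {x y : α} (h : 0 < x * y) : SignType.sign x = SignType.sign y := by
  rcases lt_trichotomy x 0 with hx|hx|hx
  · have hy : y < 0 := by nlinarith
    rw [sign_neg hx, sign_neg hy]
  · simp [hx] at h
  · have hy : 0 < y := by nlinarith
    rw [sign_pos hx, sign_pos hy]

lemma sgn_add_of_abs_lt {x y : α} (h : |y| < |x|) : SignType.sign (x + y) = SignType.sign x := by
  rcases lt_trichotomy x 0 with hx|hx|hx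
  · have : x + y < 0 := by
      rcases abs_lt.1 h with ⟨h1, h2⟩
      rcases le_or_gt 0 x with h3|h3
      · linarith
      · rw [abs_of_neg h3] at h1 h2; linarith
    rw [sign_neg this, sign_neg hx]
  · subst hx
    simp only [abs_zero] at h
    exact absurd h (abs_nonneg y).not_gt
  · have : 0 < x + y := by
      rcases abs_lt.1 h with ⟨h1, h2⟩
      rw [abs_of_pos hx] at h1 h2; linarith
    rw [sign_pos this, sign_pos hx]

lemma exists_eps {ι : Type*} (K : Finset ι) (f g : ι → α) (hf : ∀ t ∈ K, f t ≠ 0) :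
    ∃ ε : α, 0 < ε ∧ ∀ t ∈ K, |ε * g t| < |f t| := by
  rcases K.eq_empty_or_nonempty with hK|hK
  · exact ⟨1, one_pos, by simp [hK]⟩
  · set h : ι → α := fun t => |f t| / (|g t| + 1) with hh
    obtain ⟨t0, ht0, hmin⟩ := K.exists_min_image h hK
    have hpos : ∀ t ∈ K, 0 < h t := by
      intro t ht
      have : 0 < |f t| := abs_pos.2 (hf t ht)
      have : 0 < |g t| + 1 := by positivity
      exact div_pos ‹0 < |f t|› this
    refine ⟨h t0 / 2, by have := hpos t0 ht0; positivity, ?_⟩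
    intro t ht
    have h1 : h t0 / 2 ≤ h t / 2 := by linarith [hmin t ht]
    have h2 : 0 < |g t| + 1 := by positivity
    have h3 : |h t0 / 2 * g t| = (h t0 / 2) * |g t| := by
      rw [abs_mul, abs_of_pos (by have := hpos t0 ht0; positivity)]
    rw [h3]
    calc (h t0 / 2) * |g t| ≤ (h t / 2) * (|g t| + 1) := by
          apply mul_le_mul h1 (by linarith) (abs_nonneg _) (by have := hpos t ht; positivity)
      _ = |f t| / 2 * ((|g t| + 1) / (|g t| + 1)) := by ring
      _ = |f t| / 2 := by rw [div_self h2.ne']; ring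
      _ < |f t| := by have : 0 < |f t| := abs_pos.2 (hf t ht); linarith

end more
section lemB
open SignType

lemma lemB_perp {n : ℕ} (p q : Fin n → ℝ × ℝ)
    (H1 : ∀ s t, SignType.sign (det2 (p s) (p t)) = SignType.sign (det2 (q s) (q t)))
    (a : ℝ × ℝ) (j0 : Fin n) (hp0 : p j0 ≠ 0) (hperp : dot2 a (p j0) = 0) :
    ∃ b : ℝ × ℝ, ∀ t, SignType.sign (dot2 b (q t)) = SignType.sign (dot2 a (p t)) := by
  set lam := det2 (p j0) a / dot2 (p j0) (p j0) with hlam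
  have ha : a = lam • rot2 (p j0) := perp_rep hperp hp0
  refine ⟨((SignType.sign lam : ℝ)) • rot2 (q j0), fun t => ?_⟩
  rw [dot2_smul_left, dot2_rot2_left, sign_mul, sgn_cast_signType, ← H1 j0 t]
  conv_rhs => rw [ha, dot2_smul_left, dot2_rot2_left, sign_mul]

lemma lemB {n : ℕ} (p q : Fin n → ℝ × ℝ)
    (H1 : ∀ s t, SignType.sign (det2 (p s) (p t)) = SignType.sign (det2 (q s) (q t)))
    (H2 : ∀ s t, det2 (p s) (p t) = 0 →
      SignType.sign (dot2 (p s) (p t)) = SignType.sign (dot2 (q s) (q t)))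
    (a : ℝ × ℝ) :
    ∃ b : ℝ × ℝ, ∀ t, SignType.sign (dot2 b (q t)) = SignType.sign (dot2 a (p t)) := by
  classical
  have hz : ∀ s, p s = 0 → q s = 0 := by
    intro s hs
    have h := H2 s s (by rw [det2_self])
    rw [hs, dot2_zero_left, sign_zero] at h
    exact dot2_self_eq_zero (sign_eq_zero_iff.1 h.symm)
  have hzne : ∀ s, p s ≠ 0 → q s ≠ 0 := by
    intro s hs hq
    have h := H2 s s (by rw [det2_self])
    rw [hq, dot2_zero_right, sign_zero, sign_eq_zero_iff] at h
    exact hs (dot2_self_eq_zero h)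
  by_cases hperp : ∃ j0, p j0 ≠ 0 ∧ dot2 a (p j0) = 0
  · obtain ⟨j0, h1, h2⟩ := hperp
    exact lemB_perp p q H1 a j0 h1 h2
  push_neg at hperp
  by_cases hallz : ∀ j, p j = 0
  · refine ⟨0, fun t => ?_⟩
    rw [dot2_zero_left, hallz t, dot2_zero_right]
  push_neg at hallz
  by_cases hpar : ∀ j, p j ≠ 0 → det2 a (p j) = 0
  · obtain ⟨j1, hj1⟩ := hallz
    have hd1 : dot2 a (p j1) ≠ 0 := hperp j1 hj1
    refine ⟨((SignType.sign (dot2 a (p j1)) : ℝ)) • q j1, fun t => ?_⟩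
    by_cases hpt : p t = 0
    · rw [hpt, hz t hpt, dot2_zero_right, dot2_zero_right]
    · have hanz : a ≠ 0 := fun h => hd1 (by rw [h, dot2_zero_left])
      have hdet : det2 (p j1) (p t) = 0 := det2_trans hanz (hpar j1 hj1) (hpar t hpt)
      have hq : SignType.sign (dot2 (p j1) (p t)) = SignType.sign (dot2 (q j1) (q t)) :=
        H2 j1 t hdet
      have hrep : p t = (dot2 (p j1) (p t) / dot2 (p j1) (p j1)) • p j1 := collin_rep hdet hj1
      rw [dot2_smul_left, sign_mul, sgn_cast_signType, ← hq]
      conv_rhs => rw [hrep, dot2_smul_right, sign_mul, sgn_div_pos (dot2_self_pos hj1)]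
      exact mul_comm _ _
  push_neg at hpar
  obtain ⟨j1, hj1, hdet1⟩ := hpar
  have hd1 : dot2 a (p j1) ≠ 0 := hperp j1 hj1
  have hpp1 : 0 < dot2 (p j1) (p j1) := dot2_self_pos hj1
  set d1r : ℝ := ((SignType.sign (dot2 a (p j1)) : ℝ)) with hd1r
  set u : ℝ × ℝ := (-d1r) • p j1 with hu
  set rootval : Fin n → ℝ := fun j => - dot2 a (p j) / dot2 u (p j) with hroot
  set Js : Finset (Fin n) := Finset.univ.filter (fun j => dot2 u (p j) ≠ 0 ∧ 0 < rootval j)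
    with hJs
  have hupj : ∀ j, dot2 u (p j) = -d1r * dot2 (p j1) (p j) := by
    intro j; rw [hu, dot2_smul_left]
  have hj1Js : j1 ∈ Js := by
    rw [hJs, Finset.mem_filter]
    refine ⟨Finset.mem_univ _, ?_, ?_⟩
    · rw [hupj j1]
      rcases hd1.lt_or_gt with h|h
      · rw [hd1r, sign_neg h]
        simp only [SignType.coe_neg_one]
        nlinarith
      · rw [hd1r, sign_pos h]
        simp only [SignType.coe_one]
        nlinarith
    · simp only [hroot, hupj j1]
      rcases hd1.lt_or_gt with h|h
      · rw [hd1r, sign_neg h]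
        simp only [SignType.coe_neg_one]
        apply div_pos (by linarith) (by nlinarith)
      · rw [hd1r, sign_pos h]
        simp only [SignType.coe_one]
        rw [div_pos_iff]
        exact Or.inr ⟨by linarith, by nlinarith⟩
  have hJsne : Js.Nonempty := ⟨j1, hj1Js⟩
  have hImne : (Js.image rootval).Nonempty := hJsne.image _
  set tstar := (Js.image rootval).min' hImne with hts
  have htsmem := (Js.image rootval).min'_mem hImne
  rw [Finset.mem_image] at htsmem
  obtain ⟨j0, hj0Js, hj0t⟩ := htsmem
  have hj0Js' := hj0Js
  rw [hJs, Finset.mem_filter] at hj0Js'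
  obtain ⟨-, hbeta0, hrootpos0⟩ := hj0Js'
  have hj0t' : rootval j0 = tstar := by rw [hts]; exact hj0t
  have htspos : 0 < tstar := by rw [← hj0t']; exact hrootpos0
  have hmin : ∀ j, dot2 u (p j) ≠ 0 → 0 < rootval j → tstar ≤ rootval j := by
    intro j h1 h2
    exact (Js.image rootval).min'_le _ (Finset.mem_image_of_mem _
      (by rw [hJs, Finset.mem_filter]; exact ⟨Finset.mem_univ _, h1, h2⟩))
  set a' := a + tstar • u with ha'
  have hdotA' : ∀ j, dot2 a' (p j) = dot2 a (p j) + tstar * dot2 u (p j) := by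
    intro j; rw [ha', dot2_add_left, dot2_smul_left]
  have hpj0nz : p j0 ≠ 0 := by
    intro h; apply hbeta0; rw [h, dot2_zero_right]
  have hj0perp : dot2 a' (p j0) = 0 := by
    rw [hdotA' j0, ← hj0t']
    simp only [hroot]
    field_simp; ring
  have hdet1' : det2 a' (p j1) = det2 a (p j1) := by
    rw [ha', det2_add_left, det2_smul_left, hu, det2_smul_left, det2_self]; ring
  have ha'nz : a' ≠ 0 := by
    intro h; rw [h, det2_zero_left] at hdet1'; exact hdet1 hdet1'.symm
  have hF1 : ∀ t, p t ≠ 0 → dot2 a' (p t) ≠ 0 →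
      SignType.sign (dot2 a' (p t)) = SignType.sign (dot2 a (p t)) := by
    intro t hpt hne
    have halpha := hperp t hpt
    have hft : dot2 a' (p t) = dot2 a (p t) + tstar * dot2 u (p t) := hdotA' t
    set al := dot2 a (p t) with hal
    set be := dot2 u (p t) with hbe
    apply sgn_eq_of_mul_pos
    rw [hft]
    rcases lt_or_ge 0 ((al + tstar * be) * al) with h|h
    · exact h
    exfalso
    have hprod : (al + tstar * be) * al < 0 :=
      lt_of_le_of_ne h (mul_ne_zero (by rwa [hft] at hne) halpha)
    have hbne : be ≠ 0 := by
      intro hb; rw [hb] at hprod; nlinarith [mul_self_nonneg al]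
    have hab : al * be < 0 := by nlinarith [sq_nonneg al]
    have hrpos : 0 < rootval t := by
      simp only [hroot, ← hal, ← hbe]
      rcases hbne.lt_or_gt with hb|hb
      · rw [div_pos_iff]; exact Or.inr ⟨by nlinarith, hb⟩
      · rw [div_pos_iff]; exact Or.inl ⟨by nlinarith, hb⟩
    have hlt : rootval t < tstar := by
      simp only [hroot, ← hal, ← hbe]
      rcases hbne.lt_or_gt with hb|hb
      · rw [div_lt_iff_of_neg hb]; nlinarith
      · rw [div_lt_iff₀ hb]; nlinarith
    exact absurd (hmin t hbne hrpos) (not_le.2 hlt)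
  obtain ⟨b', hb'⟩ := lemB_perp p q H1 a' j0 hpj0nz hj0perp
  have hd0 : dot2 a (p j0) ≠ 0 := hperp j0 hpj0nz
  set wv : ℝ × ℝ := ((SignType.sign (dot2 a (p j0)) : ℝ)) • q j0 with hwv
  set K : Finset (Fin n) := Finset.univ.filter (fun t => p t ≠ 0 ∧ det2 (p j0) (p t) ≠ 0)
    with hK
  have ha't : ∀ t, p t ≠ 0 → det2 (p j0) (p t) ≠ 0 → dot2 a' (p t) ≠ 0 := by
    intro t hpt hdt h
    apply hdt
    have h0 : p j0 = (det2 a' (p j0) / dot2 a' a') • rot2 a' :=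
      perp_rep (by rw [dot2_comm]; exact hj0perp) ha'nz
    have h1 : p t = (det2 a' (p t) / dot2 a' a') • rot2 a' :=
      perp_rep (by rw [dot2_comm]; exact h) ha'nz
    rw [h0, h1, det2_smul_left, det2_smul_right, det2_self]; ring
  have hKnz : ∀ t ∈ K, dot2 b' (q t) ≠ 0 := by
    intro t ht
    rw [hK, Finset.mem_filter] at ht
    obtain ⟨-, hpt, hdt⟩ := ht
    intro h
    have hbt := hb' t
    rw [h, sign_zero] at hbt
    exact ha't t hpt hdt (sign_eq_zero_iff.1 hbt.symm)
  obtain ⟨ε, hε, hεlt⟩ := exists_eps K (fun t => dot2 b' (q t)) (fun t => dot2 wv (q t)) hKnz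
  refine ⟨b' + ε • wv, fun t => ?_⟩
  by_cases hpt : p t = 0
  · rw [hz t hpt, hpt, dot2_zero_right, dot2_zero_right]
  by_cases hdt : det2 (p j0) (p t) = 0
  · have hqq0 : q j0 ≠ 0 := hzne j0 hpj0nz
    have hdq : det2 (q j0) (q t) = 0 := by
      have := H1 j0 t
      rw [hdt, sign_zero] at this
      exact sign_eq_zero_iff.1 this.symm
    have hrp : p t = (dot2 (p j0) (p t) / dot2 (p j0) (p j0)) • p j0 := collin_rep hdt hpj0nz
    have hrq : q t = (dot2 (q j0) (q t) / dot2 (q j0) (q j0)) • q j0 := collin_rep hdq hqq0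
    have hbq0 : dot2 b' (q j0) = 0 := by
      have hbt := hb' j0
      rw [hj0perp, sign_zero] at hbt
      exact sign_eq_zero_iff.1 hbt
    conv_lhs => rw [hrq, dot2_smul_right, dot2_add_left, hbq0, zero_add, dot2_smul_left,
      hwv, dot2_smul_left]
    conv_rhs => rw [hrp, dot2_smul_right]
    rw [sign_mul, sign_mul, sign_mul, sign_mul, sgn_div_pos (dot2_self_pos hqq0),
      sgn_div_pos (dot2_self_pos hpj0nz), sign_pos hε, sgn_cast_signType,
      sign_pos (dot2_self_pos hqq0), ← H2 j0 t hdt]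
    simp
  · have htK : t ∈ K := by
      rw [hK, Finset.mem_filter]
      exact ⟨Finset.mem_univ _, hpt, hdt⟩
    have key := hεlt t htK
    rw [dot2_add_left, dot2_smul_left, sgn_add_of_abs_lt key, hb' t]
    exact hF1 t hpt (ha't t hpt hdt)

end lemB
section lemA
open SignType

def c2r (v : ℚ × ℚ) : ℝ × ℝ := ((v.1 : ℝ), (v.2 : ℝ))

lemma c2r_zero : c2r 0 = 0 := by simp [c2r]

lemma c2r_eq_zero {v : ℚ × ℚ} (h : c2r v = 0) : v = 0 := by
  have h1 : (v.1:ℝ) = 0 := congrArg Prod.fst h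
  have h2 : (v.2:ℝ) = 0 := congrArg Prod.snd h
  have hv1 : v.1 = 0 := by exact_mod_cast h1
  have hv2 : v.2 = 0 := by exact_mod_cast h2
  exact Prod.ext hv1 hv2

lemma det2_c2r (u v : ℚ × ℚ) : det2 (c2r u) (c2r v) = ((det2 u v : ℚ) : ℝ) := by
  simp [det2, c2r]

lemma dot2_c2r (u v : ℚ × ℚ) : dot2 (c2r u) (c2r v) = ((dot2 u v : ℚ) : ℝ) := by
  simp [dot2, c2r]

lemma sgn_ratCast (x : ℚ) : SignType.sign ((x : ℝ)) = SignType.sign x := by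
  rcases lt_trichotomy x 0 with h|h|h
  · rw [sign_neg h, sign_neg (by exact_mod_cast h : (x:ℝ) < 0)]
  · simp [h]
  · rw [sign_pos h, sign_pos (by exact_mod_cast h : (0:ℝ) < (x:ℝ))]

lemma sgn_neg' {α : Type*} [Ring α] [LinearOrder α] [IsStrictOrderedRing α] (x : α) :
    SignType.sign (-x) = - SignType.sign x := by
  rcases lt_trichotomy x 0 with h|h|h
  · rw [sign_neg h, sign_pos (neg_pos.2 h)]; decide
  · simp [h]
  · rw [sign_pos h, sign_neg (neg_lt_zero.2 h)]

lemma rat_dense_pair {U : Set (ℝ × ℝ)} (hU : IsOpen U) {x : ℝ × ℝ} (hx : x ∈ U) :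
    ∃ v : ℚ × ℚ, c2r v ∈ U := by
  rw [Metric.isOpen_iff] at hU
  obtain ⟨ε, hε, hball⟩ := hU x hx
  obtain ⟨q1, hq1⟩ := exists_rat_near x.1 (half_pos hε)
  obtain ⟨q2, hq2⟩ := exists_rat_near x.2 (half_pos hε)
  refine ⟨(q1, q2), hball ?_⟩
  rw [Metric.mem_ball, Prod.dist_eq]
  apply max_lt
  · rw [Real.dist_eq]
    calc |(c2r (q1, q2)).1 - x.1| = |x.1 - (q1:ℝ)| := by rw [abs_sub_comm]; rfl
      _ < ε := by linarith
  · rw [Real.dist_eq]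
    calc |(c2r (q1, q2)).2 - x.2| = |x.2 - (q2:ℝ)| := by rw [abs_sub_comm]; rfl
      _ < ε := by linarith

def CondRR {n : ℕ} (p : Fin n → ℝ × ℝ) (q : Fin n → ℚ × ℚ) : Prop :=
  (∀ s t, SignType.sign (det2 (p s) (p t)) = SignType.sign (det2 (q s) (q t))) ∧
  (∀ s t, det2 (p s) (p t) = 0 →
    SignType.sign (dot2 (p s) (p t)) = SignType.sign (dot2 (q s) (q t)))

lemma cond_snoc {n : ℕ} {p : Fin (n+1) → ℝ × ℝ} {q' : Fin n → ℚ × ℚ} {v : ℚ × ℚ}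
    (IH : CondRR (Fin.init p) q')
    (h1 : ∀ t, SignType.sign (det2 (Fin.init p t) (p (Fin.last n))) =
      SignType.sign (det2 (q' t) v))
    (h2 : ∀ t, det2 (Fin.init p t) (p (Fin.last n)) = 0 →
      SignType.sign (dot2 (Fin.init p t) (p (Fin.last n))) = SignType.sign (dot2 (q' t) v))
    (h3 : SignType.sign (dot2 (p (Fin.last n)) (p (Fin.last n))) = SignType.sign (dot2 v v)) :
    CondRR p (Fin.snoc q' v) := by
  have hinit : ∀ t : Fin n, p (Fin.castSucc t) = Fin.init p t := fun t => rfl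
  constructor
  · intro s t
    induction s using Fin.lastCases with
    | last =>
      induction t using Fin.lastCases with
      | last => simp [Fin.snoc_last, det2_self]
      | cast t =>
        rw [Fin.snoc_last, Fin.snoc_castSucc, hinit t,
          det2_swap (p (Fin.last n)), det2_swap v, sgn_neg', sgn_neg', h1 t]
    | cast s =>
      induction t using Fin.lastCases with
      | last => rw [Fin.snoc_last, Fin.snoc_castSucc, hinit s]; exact h1 s
      | cast t => rw [Fin.snoc_castSucc, Fin.snoc_castSucc, hinit s, hinit t]; exact IH.1 s t
  · intro s t hd
    induction s using Fin.lastCases with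
    | last =>
      induction t using Fin.lastCases with
      | last => rw [Fin.snoc_last]; exact h3
      | cast t =>
        rw [Fin.snoc_last, Fin.snoc_castSucc, hinit t] at *
        rw [dot2_comm (p (Fin.last n)), dot2_comm v]
        apply h2 t
        rw [det2_swap] at hd
        simpa using hd
    | cast s =>
      induction t using Fin.lastCases with
      | last =>
        rw [Fin.snoc_last, Fin.snoc_castSucc, hinit s] at *
        exact h2 s hd
      | cast t =>
        rw [Fin.snoc_castSucc, Fin.snoc_castSucc, hinit s, hinit t] at *
        exact IH.2 s t hd

lemma lemA {n : ℕ} (p : Fin n → ℝ × ℝ) : ∃ q : Fin n → ℚ × ℚ, CondRR p q := by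
  classical
  induction n with
  | zero => exact ⟨fun i => 0, fun s t => s.elim0, fun s t => s.elim0⟩
  | succ n IH =>
    obtain ⟨q', hq'⟩ := IH (Fin.init p)
    have hz' : ∀ t, Fin.init p t = 0 → q' t = 0 := by
      intro t ht
      have h := hq'.2 t t (by rw [det2_self])
      rw [ht, dot2_zero_left, sign_zero] at h
      exact dot2_self_eq_zero (sign_eq_zero_iff.1 h.symm)
    have hzq' : ∀ t, Fin.init p t ≠ 0 → q' t ≠ 0 := by
      intro t ht hq
      have h := hq'.2 t t (by rw [det2_self])
      rw [hq, dot2_zero_right, sign_zero, sign_eq_zero_iff] at h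
      exact ht (dot2_self_eq_zero h)
    by_cases hlast : p (Fin.last n) = 0
    · refine ⟨Fin.snoc q' 0, cond_snoc hq' ?_ ?_ ?_⟩
      · intro t; rw [hlast, det2_zero_right, det2_zero_right, sign_zero, sign_zero]
      · intro t _; rw [hlast, dot2_zero_right, dot2_zero_right, sign_zero, sign_zero]
      · rw [hlast, dot2_zero_right, dot2_zero_right, sign_zero, sign_zero]
    by_cases hpar : ∃ s0, Fin.init p s0 ≠ 0 ∧ det2 (Fin.init p s0) (p (Fin.last n)) = 0
    · obtain ⟨s0, hs0, hdet0⟩ := hpar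
      have hq0 : q' s0 ≠ 0 := hzq' s0 hs0
      have hdot0 : dot2 (Fin.init p s0) (p (Fin.last n)) ≠ 0 := by
        intro h
        apply hlast
        have := collin_rep hdet0 hs0
        rw [h, zero_div, zero_smul] at this
        exact this
      set c : ℝ := dot2 (Fin.init p s0) (p (Fin.last n)) / dot2 (Fin.init p s0) (Fin.init p s0)
        with hc
      have hrep : p (Fin.last n) = c • Fin.init p s0 := collin_rep hdet0 hs0
      have hcs : SignType.sign c = SignType.sign (dot2 (Fin.init p s0) (p (Fin.last n))) := by
        rw [hc]; exact sgn_div_pos (dot2_self_pos hs0)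
      have hcnz : c ≠ 0 := by
        intro h; rw [h, zero_smul] at hrep; exact hlast hrep
      set cq : ℚ := ((SignType.sign (dot2 (Fin.init p s0) (p (Fin.last n))) : ℚ)) with hcq
      have hcqs : SignType.sign cq = SignType.sign c := by
        rw [hcq, sgn_cast_signType, hcs]
      refine ⟨Fin.snoc q' (cq • q' s0), cond_snoc hq' ?_ ?_ ?_⟩
      · intro t
        conv_lhs => rw [hrep, det2_smul_right, sign_mul]
        rw [det2_smul_right, sign_mul, hcqs, det2_swap (Fin.init p t), det2_swap (q' t),
          sgn_neg', sgn_neg', hq'.1 s0 t]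
      · intro t hd
        have hdst : det2 (Fin.init p s0) (Fin.init p t) = 0 := by
          rw [hrep, det2_swap, det2_smul_left] at hd
          rcases mul_eq_zero.1 (neg_eq_zero.1 hd) with h|h
          · exact absurd h hcnz
          · exact h
        conv_lhs => rw [hrep, dot2_smul_right, sign_mul]
        rw [dot2_smul_right, sign_mul, hcqs, dot2_comm (Fin.init p t), dot2_comm (q' t),
          hq'.2 s0 t hdst]
      · have h1 : SignType.sign (dot2 (p (Fin.last n)) (p (Fin.last n))) = 1 :=
          sign_pos (dot2_self_pos hlast)
        have hcqnz : cq ≠ 0 := by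
          intro h
          rw [hcq] at h
          have : SignType.sign (dot2 (Fin.init p s0) (p (Fin.last n))) = 0 := by
            have := sgn_cast_signType (α := ℚ)
              (SignType.sign (dot2 (Fin.init p s0) (p (Fin.last n))))
            rw [h] at this
            rw [← this, sign_zero]
          exact hdot0 (sign_eq_zero_iff.1 this)
        have h2 : SignType.sign (dot2 (cq • q' s0) (cq • q' s0)) = 1 := by
          rw [dot2_smul_left, dot2_smul_right]
          apply sign_pos
          have := dot2_self_pos hq0
          have : 0 < cq * cq := by
            rcases hcqnz.lt_or_gt with h|h
            · nlinarith
            · nlinarith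
          nlinarith [dot2_self_pos hq0]
        rw [h1, h2]
    -- case 3
    push_neg at hpar
    by_cases hall0 : ∀ t, Fin.init p t = 0
    · refine ⟨Fin.snoc q' (1, 0), cond_snoc hq' ?_ ?_ ?_⟩
      · intro t
        rw [hall0 t, hz' t (hall0 t), det2_zero_left, det2_zero_left, sign_zero, sign_zero]
      · intro t _
        rw [hall0 t, hz' t (hall0 t), dot2_zero_left, dot2_zero_left, sign_zero, sign_zero]
      · rw [sign_pos (dot2_self_pos hlast), sign_pos (dot2_self_pos (by
          intro h
          rw [Prod.ext_iff] at h
          simp at h))]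
    push_neg at hall0
    -- use lemB on rotated vectors
    have hcond1 : ∀ s t, SignType.sign (det2 (rot2 (Fin.init p s)) (rot2 (Fin.init p t))) =
        SignType.sign (det2 (rot2 (c2r (q' s))) (rot2 (c2r (q' t)))) := by
      intro s t
      rw [det2_rot2_rot2, det2_rot2_rot2, det2_c2r, sgn_ratCast]
      exact hq'.1 s t
    have hcond2 : ∀ s t, det2 (rot2 (Fin.init p s)) (rot2 (Fin.init p t)) = 0 →
        SignType.sign (dot2 (rot2 (Fin.init p s)) (rot2 (Fin.init p t))) =
        SignType.sign (dot2 (rot2 (c2r (q' s))) (rot2 (c2r (q' t)))) := by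
      intro s t hd
      rw [det2_rot2_rot2] at hd
      rw [dot2_rot2_rot2, dot2_rot2_rot2, dot2_c2r, sgn_ratCast]
      exact hq'.2 s t hd
    obtain ⟨b, hb⟩ := lemB (fun t => rot2 (Fin.init p t)) (fun t => rot2 (c2r (q' t)))
      hcond1 hcond2 (p (Fin.last n))
    -- hb t : sign (dot2 b (rot2 (c2r (q' t)))) = sign (dot2 (p last) (rot2 (init p t)))
    have hbt : ∀ t, SignType.sign (det2 (c2r (q' t)) b) =
        SignType.sign (det2 (Fin.init p t) (p (Fin.last n))) := by
      intro t
      have h := hb t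
      rw [dot2_comm b, dot2_rot2_left, dot2_comm (p (Fin.last n)), dot2_rot2_left] at h
      exact h
    set U : Set (ℝ × ℝ) := {x | ∀ t, Fin.init p t ≠ 0 →
      SignType.sign (det2 (c2r (q' t)) x) =
      SignType.sign (det2 (Fin.init p t) (p (Fin.last n)))} with hU
    have hUopen : IsOpen U := by
      have : U = ⋂ t, {x | Fin.init p t ≠ 0 →
          SignType.sign (det2 (c2r (q' t)) x) =
          SignType.sign (det2 (Fin.init p t) (p (Fin.last n)))} := by
        ext x; simp [hU, Set.mem_iInter]
      rw [this]
      apply isOpen_iInter_of_finite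
      intro t
      by_cases hpt : Fin.init p t = 0
      · simp [hpt]
      · have hcont : Continuous (fun x : ℝ × ℝ => det2 (c2r (q' t)) x) := by
          unfold det2; fun_prop
        have hσ : det2 (Fin.init p t) (p (Fin.last n)) ≠ 0 := hpar t hpt
        have heq : {x : ℝ × ℝ | Fin.init p t ≠ 0 →
            SignType.sign (det2 (c2r (q' t)) x) =
            SignType.sign (det2 (Fin.init p t) (p (Fin.last n)))} =
            {x : ℝ × ℝ | SignType.sign (det2 (c2r (q' t)) x) =
            SignType.sign (det2 (Fin.init p t) (p (Fin.last n)))} := by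
          ext x; simp [hpt]
        rw [heq]
        rcases hσ.lt_or_gt with h|h
        · have : {x : ℝ × ℝ | SignType.sign (det2 (c2r (q' t)) x) =
              SignType.sign (det2 (Fin.init p t) (p (Fin.last n)))} =
              (fun x : ℝ × ℝ => det2 (c2r (q' t)) x) ⁻¹' (Set.Iio 0) := by
            ext x
            rw [sign_neg h]
            simp only [Set.mem_setOf_eq, Set.mem_preimage, Set.mem_Iio]
            constructor
            · intro hx
              by_contra hge
              push_neg at hge
              rcases hge.lt_or_eq with h'|h'
              · rw [sign_pos h'] at hx; exact absurd hx (by decide)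
              · rw [← h', sign_zero] at hx; exact absurd hx (by decide)
            · intro hx; rw [sign_neg hx]
          rw [this]
          exact (isOpen_Iio).preimage hcont
        · have : {x : ℝ × ℝ | SignType.sign (det2 (c2r (q' t)) x) =
              SignType.sign (det2 (Fin.init p t) (p (Fin.last n)))} =
              (fun x : ℝ × ℝ => det2 (c2r (q' t)) x) ⁻¹' (Set.Ioi 0) := by
            ext x
            rw [sign_pos h]
            simp only [Set.mem_setOf_eq, Set.mem_preimage, Set.mem_Ioi]
            constructor
            · intro hx
              by_contra hge
              push_neg at hge
              rcases hge.lt_or_eq with h'|h'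
              · rw [sign_neg h'] at hx; exact absurd hx (by decide)
              · rw [h', sign_zero] at hx; exact absurd hx (by decide)
            · intro hx; rw [sign_pos hx]
          rw [this]
          exact (isOpen_Ioi).preimage hcont
    have hbU : b ∈ U := by
      intro t _
      exact hbt t
    obtain ⟨v, hv⟩ := rat_dense_pair hUopen hbU
    have hvnz : v ≠ 0 := by
      obtain ⟨t0, ht0⟩ := hall0
      intro h
      have := hv t0 ht0
      rw [h, c2r_zero, det2_zero_right, sign_zero] at this
      exact (hpar t0 ht0) (sign_eq_zero_iff.1 this.symm)
    refine ⟨Fin.snoc q' v, cond_snoc hq' ?_ ?_ ?_⟩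
    · intro t
      by_cases hpt : Fin.init p t = 0
      · rw [hpt, hz' t hpt, det2_zero_left, det2_zero_left, sign_zero, sign_zero]
      · have := hv t hpt
        rw [det2_c2r, sgn_ratCast] at this
        rw [← this]
    · intro t hd
      by_cases hpt : Fin.init p t = 0
      · rw [hpt, hz' t hpt, dot2_zero_left, dot2_zero_left, sign_zero, sign_zero]
      · exact absurd hd (hpar t hpt)
    · rw [sign_pos (dot2_self_pos hlast), sign_pos (dot2_self_pos hvnz)]

end lemA
section lemC
open SignType

variable {α : Type*}

lemma det2_rot2_self [CommRing α] [LinearOrder α] [IsStrictOrderedRing α] (u : α × α) : det2 u (rot2 u) = dot2 u u := by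
  simp only [det2, dot2, rot2]; ring

lemma det2_neg_right [CommRing α] [LinearOrder α] [IsStrictOrderedRing α] (u v : α × α) : det2 u (-v) = - det2 u v := by
  simp [det2]; ring

lemma det2_sum_right [CommRing α] [LinearOrder α] [IsStrictOrderedRing α] {ι : Type*} (s : Finset ι) (u : α × α)
    (g : ι → α × α) : det2 u (∑ j ∈ s, g j) = ∑ j ∈ s, det2 u (g j) := by
  classical
  induction s using Finset.cons_induction with
  | empty => simp [det2_zero_right]
  | cons a s ha ih =>
    rw [Finset.sum_cons, Finset.sum_cons, ← ih]
    rw [show (∀ x y : α × α, det2 u (x + y) = det2 u x + det2 u y) from fun x y => by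
      simp only [det2, Prod.fst_add, Prod.snd_add]; ring]

lemma sgn_pos_transfer {β : Type*} [Field α] [LinearOrder α] [IsStrictOrderedRing α] [Field β] [LinearOrder β] [IsStrictOrderedRing β]
    {x : α} {y : β} (h : SignType.sign x = SignType.sign y) (hx : 0 < x) : 0 < y := by
  rw [sign_pos hx] at h
  rcases lt_trichotomy y 0 with h'|h'|h'
  · rw [sign_neg h'] at h; exact absurd h (by decide)
  · rw [h', sign_zero] at h; exact absurd h (by decide)
  · exact h'

lemma sgn_neg_transfer {β : Type*} [Field α] [LinearOrder α] [IsStrictOrderedRing α] [Field β] [LinearOrder β] [IsStrictOrderedRing β]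
    {x : α} {y : β} (h : SignType.sign x = SignType.sign y) (hx : x < 0) : y < 0 := by
  rw [sign_neg hx] at h
  rcases lt_trichotomy y 0 with h'|h'|h'
  · exact h'
  · rw [h', sign_zero] at h; exact absurd h (by decide)
  · rw [sign_pos h'] at h; exact absurd h (by decide)

lemma sgn_zero_transfer {β : Type*} [Field α] [LinearOrder α] [IsStrictOrderedRing α] [Field β] [LinearOrder β] [IsStrictOrderedRing β]
    {x : α} {y : β} (h : SignType.sign x = SignType.sign y) (hx : x = 0) : y = 0 := by
  rw [hx, sign_zero] at h
  exact sign_eq_zero_iff.1 h.symm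

/-- Nonnegative rational spanning from a positively-oriented triple. -/
lemma tri_span {n : ℕ} (w' : Fin n → ℚ × ℚ) (a b c : Fin n)
    (d1 : 0 < det2 (w' a) (w' b)) (d2 : 0 < det2 (w' b) (w' c))
    (d3 : 0 < det2 (w' c) (w' a)) (x : ℚ × ℚ) :
    ∃ d : Fin n → ℚ, (∀ j, 0 ≤ d j) ∧ x = ∑ j, d j • w' j := by
  classical
  have hab : a ≠ b := by intro h; rw [h, det2_self] at d1; exact absurd d1 (lt_irrefl _)
  have hbc : b ≠ c := by intro h; rw [h, det2_self] at d2; exact absurd d2 (lt_irrefl _)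
  have hca : c ≠ a := by intro h; rw [h, det2_self] at d3; exact absurd d3 (lt_irrefl _)
  set D := det2 (w' a) (w' b) with hD
  -- Cramer: express x over (w' a, w' b)
  set al : ℚ := -(D⁻¹ * det2 (w' b) x) with hal
  set be : ℚ := D⁻¹ * det2 (w' a) x with hbe
  have hD0 : D ≠ 0 := d1.ne'
  have hDx : D • x = det2 (w' a) x • w' b - det2 (w' b) x • w' a := by
    have hcr := cramer2 (w' a) (w' b) x
    have h2 := eq_neg_of_add_eq_zero_right hcr
    rw [h2]; module
  have hx : x = al • w' a + be • w' b := by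
    have hxx : x = D⁻¹ • (D • x) := by
      rw [smul_smul, inv_mul_cancel₀ hD0, one_smul]
    conv_lhs => rw [hxx, hDx]
    rw [hal, hbe]
    module
  -- positive circuit among a b c
  set Ta : ℚ := det2 (w' b) (w' c) with hTa
  set Tb : ℚ := det2 (w' c) (w' a) with hTb
  set Tc : ℚ := det2 (w' a) (w' b) with hTc
  have hcirc : Ta • w' a + Tb • w' b + Tc • w' c = 0 := by
    have hcr := cramer2 (w' a) (w' b) (w' c)
    rw [hTa, hTb, hTc]
    have : det2 (w' c) (w' a) • w' b = -(det2 (w' a) (w' c) • w' b) := by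
      rw [det2_swap (w' c) (w' a)]; module
    rw [this]
    calc det2 (w' b) (w' c) • w' a + -(det2 (w' a) (w' c) • w' b) + det2 (w' a) (w' b) • w' c
        = det2 (w' b) (w' c) • w' a - det2 (w' a) (w' c) • w' b + det2 (w' a) (w' b) • w' c := by
          module
      _ = 0 := hcr
  set mu : ℚ := max (max (-al / Ta) (-be / Tb)) 0 with hmu
  have hmu0 : 0 ≤ mu := le_max_right _ _
  have hmua : 0 ≤ al + mu * Ta := by
    have h1 : -al / Ta ≤ mu := le_trans (le_max_left _ _) (le_max_left _ _)
    rw [div_le_iff₀ d2] at h1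
    linarith
  have hmub : 0 ≤ be + mu * Tb := by
    have h1 : -be / Tb ≤ mu := le_trans (le_max_right _ _) (le_max_left _ _)
    rw [div_le_iff₀ d3] at h1
    linarith
  set d : Fin n → ℚ := fun j =>
    (if j = a then al + mu * Ta else 0) + (if j = b then be + mu * Tb else 0) +
      (if j = c then mu * Tc else 0) with hd
  refine ⟨d, ?_, ?_⟩
  · intro j
    rw [hd]
    dsimp only
    refine add_nonneg (add_nonneg ?_ ?_) ?_
    · rcases eq_or_ne j a with h|h
      · rw [if_pos h]; exact hmua
      · rw [if_neg h]
    · rcases eq_or_ne j b with h|h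
      · rw [if_pos h]; exact hmub
      · rw [if_neg h]
    · rcases eq_or_ne j c with h|h
      · rw [if_pos h]; exact mul_nonneg hmu0 d1.le
      · rw [if_neg h]
  · have hsplit : ∑ j, d j • w' j =
        (∑ j, (if j = a then al + mu * Ta else 0) • w' j) +
        (∑ j, (if j = b then be + mu * Tb else 0) • w' j) +
        (∑ j, (if j = c then mu * Tc else 0) • w' j) := by
      rw [← Finset.sum_add_distrib, ← Finset.sum_add_distrib]
      apply Finset.sum_congr rfl
      intro j _
      rw [hd]; dsimp only; rw [add_smul, add_smul]
    have e1 : ∑ j, (if j = a then al + mu * Ta else 0) • w' j = (al + mu * Ta) • w' a := by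
      rw [Finset.sum_eq_single a]
      · simp
      · intro j _ hj; simp [hj]
      · intro h; exact absurd (Finset.mem_univ a) h
    have e2 : ∑ j, (if j = b then be + mu * Tb else 0) • w' j = (be + mu * Tb) • w' b := by
      rw [Finset.sum_eq_single b]
      · simp
      · intro j _ hj; simp [hj]
      · intro h; exact absurd (Finset.mem_univ b) h
    have e3 : ∑ j, (if j = c then mu * Tc else 0) • w' j = (mu * Tc) • w' c := by
      rw [Finset.sum_eq_single c]
      · simp
      · intro j _ hj; simp [hj]
      · intro h; exact absurd (Finset.mem_univ c) h
    rw [hsplit, e1, e2, e3, hx]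
    have : (al + mu * Ta) • w' a + (be + mu * Tb) • w' b + (mu * Tc) • w' c =
        (al • w' a + be • w' b) + mu • (Ta • w' a + Tb • w' b + Tc • w' c) := by
      module
    rw [this, hcirc, smul_zero, add_zero]

end lemC
section lemC2
open SignType

variable {α : Type*}

lemma cramer_decomp [Field α] [LinearOrder α] [IsStrictOrderedRing α] (u v x : α × α) (h : det2 u v ≠ 0) :
    x = (-(det2 u v)⁻¹ * det2 v x) • u + ((det2 u v)⁻¹ * det2 u x) • v := by
  have hDx : det2 u v • x = det2 u x • v - det2 v x • u := by
    have hcr := cramer2 u v x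
    have h2 := eq_neg_of_add_eq_zero_right hcr
    rw [h2]; module
  have hxx : x = (det2 u v)⁻¹ • (det2 u v • x) := by
    rw [smul_smul, inv_mul_cancel₀ h, one_smul]
  conv_lhs => rw [hxx, hDx]
  module

lemma ind_sum [Field α] [LinearOrder α] [IsStrictOrderedRing α] {n : ℕ} (w : Fin n → α × α) (i : Fin n) (c : α) :
    ∑ k, (if k = i then c else 0) • w k = c • w i := by
  rw [Finset.sum_eq_single i]
  · simp
  · intro j _ hj; simp [hj]
  · intro h; exact absurd (Finset.mem_univ i) h

lemma two_ind_span [Field α] [LinearOrder α] [IsStrictOrderedRing α] {n : ℕ} (w : Fin n → α × α) (i j : Fin n)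
    (ci cj : α) (hci : 0 ≤ ci) (hcj : 0 ≤ cj) :
    ∃ d : Fin n → α, (∀ k, 0 ≤ d k) ∧ ∑ k, d k • w k = ci • w i + cj • w j := by
  classical
  refine ⟨fun k => (if k = i then ci else 0) + (if k = j then cj else 0), ?_, ?_⟩
  · intro k
    refine add_nonneg ?_ ?_
    · rcases eq_or_ne k i with h|h
      · rw [if_pos h]; exact hci
      · rw [if_neg h]
    · rcases eq_or_ne k j with h|h
      · rw [if_pos h]; exact hcj
      · rw [if_neg h]
  · have : ∀ k : Fin n, ((if k = i then ci else 0) + (if k = j then cj else 0)) • w k =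
        (if k = i then ci else 0) • w k + (if k = j then cj else 0) • w k := by
      intro k; rw [add_smul]
    rw [Finset.sum_congr rfl (fun k _ => this k), Finset.sum_add_distrib, ind_sum, ind_sum]

/-- Nonnegative rational spanning from an antiparallel pair plus points on both sides. -/
lemma pair_span {n : ℕ} (w' : Fin n → ℚ × ℚ) (s t e f : Fin n) (lam : ℚ)
    (hws : w' s ≠ 0) (hlam : lam < 0) (hwt : w' t = lam • w' s)
    (he : 0 < det2 (w' s) (w' e)) (hf : det2 (w' s) (w' f) < 0) (x : ℚ × ℚ) :
    ∃ d : Fin n → ℚ, (∀ j, 0 ≤ d j) ∧ x = ∑ j, d j • w' j := by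
  rcases le_or_gt 0 (det2 (w' s) x) with hge|hlt
  · have hdec := cramer_decomp (w' s) (w' e) x he.ne'
    set al : ℚ := -(det2 (w' s) (w' e))⁻¹ * det2 (w' e) x with hal
    set be : ℚ := (det2 (w' s) (w' e))⁻¹ * det2 (w' s) x with hbe
    have hbe0 : 0 ≤ be := mul_nonneg (inv_nonneg.2 he.le) hge
    rcases le_or_gt 0 al with hal0|hal0
    · obtain ⟨d, hd0, hdsum⟩ := two_ind_span w' s e al be hal0 hbe0
      exact ⟨d, hd0, by rw [hdsum, ← hdec]⟩
    · have hcoef : 0 ≤ al / lam := le_of_lt (div_pos_of_neg_of_neg hal0 hlam)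
      obtain ⟨d, hd0, hdsum⟩ := two_ind_span w' t e (al / lam) be hcoef hbe0
      refine ⟨d, hd0, ?_⟩
      rw [hdsum, hwt, smul_smul, div_mul_cancel₀ _ hlam.ne, ← hdec]
  · have hdec := cramer_decomp (w' s) (w' f) x hf.ne
    set al : ℚ := -(det2 (w' s) (w' f))⁻¹ * det2 (w' f) x with hal
    set be : ℚ := (det2 (w' s) (w' f))⁻¹ * det2 (w' s) x with hbe
    have hbe0 : 0 ≤ be := le_of_lt (mul_pos_of_neg_of_neg (inv_neg''.2 hf) hlt)
    rcases le_or_gt 0 al with hal0|hal0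
    · obtain ⟨d, hd0, hdsum⟩ := two_ind_span w' s f al be hal0 hbe0
      exact ⟨d, hd0, by rw [hdsum, ← hdec]⟩
    · have hcoef : 0 ≤ al / lam := le_of_lt (div_pos_of_neg_of_neg hal0 hlam)
      obtain ⟨d, hd0, hdsum⟩ := two_ind_span w' t f (al / lam) be hcoef hbe0
      refine ⟨d, hd0, ?_⟩
      rw [hdsum, hwt, smul_smul, div_mul_cancel₀ _ hlam.ne, ← hdec]

end lemC2
section lemC3
open SignType

lemma lemC {n : ℕ} (w : Fin n → ℝ × ℝ) (w' : Fin n → ℚ × ℚ)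
    (H1 : ∀ s t, SignType.sign (det2 (w s) (w t)) = SignType.sign (det2 (w' s) (w' t)))
    (H2 : ∀ s t, det2 (w s) (w t) = 0 →
      SignType.sign (dot2 (w s) (w t)) = SignType.sign (dot2 (w' s) (w' t)))
    (tc : Fin n → ℝ) (htc : ∀ j, 0 < tc j) (hsum : ∑ j, tc j • w j = 0) :
    ∃ t' : Fin n → ℚ, (∀ j, 0 < t' j) ∧ ∑ j, t' j • w' j = 0 := by
  classical
  have hz : ∀ s, w s = 0 → w' s = 0 := by
    intro s hs
    have h := H2 s s (by rw [det2_self])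
    rw [hs, dot2_zero_left, sign_zero] at h
    exact dot2_self_eq_zero (sign_eq_zero_iff.1 h.symm)
  have hzne : ∀ s, w s ≠ 0 → w' s ≠ 0 := by
    intro s hs hq
    have h := H2 s s (by rw [det2_self])
    rw [hq, dot2_zero_right, sign_zero, sign_eq_zero_iff] at h
    exact hs (dot2_self_eq_zero h)
  by_cases hC : ∃ s0 t0, det2 (w s0) (w t0) ≠ 0
  · -- full-dimensional case
    obtain ⟨s0, t0, hD⟩ := hC
    have hws0 : w s0 ≠ 0 := by
      intro h; rw [h, det2_zero_left] at hD; exact hD rfl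
    -- nonnegative spanning over ℝ
    have hpos : ∀ x : ℝ × ℝ, ∃ d : Fin n → ℝ, (∀ j, 0 ≤ d j) ∧ x = ∑ j, d j • w j := by
      intro x
      have hdec := cramer_decomp (w s0) (w t0) x hD
      set al : ℝ := -(det2 (w s0) (w t0))⁻¹ * det2 (w t0) x with hal
      set be : ℝ := (det2 (w s0) (w t0))⁻¹ * det2 (w s0) x with hbe
      set c : Fin n → ℝ := fun j =>
        (if j = s0 then al else 0) + (if j = t0 then be else 0) with hc
      have hcs : ∑ j, c j • w j = x := by
        have hstep : ∀ k : Fin n, c k • w k =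
            (if k = s0 then al else 0) • w k + (if k = t0 then be else 0) • w k := by
          intro k; rw [hc]; dsimp only; rw [add_smul]
        rw [Finset.sum_congr rfl (fun k _ => hstep k), Finset.sum_add_distrib,
          ind_sum, ind_sum, ← hdec]
      set mu : ℝ := Finset.univ.sup' ⟨s0, Finset.mem_univ s0⟩ (fun j => -c j / tc j) with hmu
      have hmuge : ∀ j, -c j / tc j ≤ mu :=
        fun j => Finset.le_sup' (fun j => -c j / tc j) (Finset.mem_univ j)
      refine ⟨fun j => c j + mu * tc j, ?_, ?_⟩
      · intro j
        have h1 := hmuge j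
        rw [div_le_iff₀ (htc j)] at h1
        show 0 ≤ c j + mu * tc j
        linarith
      · have hstep : ∀ k : Fin n, (c k + mu * tc k) • w k = c k • w k + mu • (tc k • w k) := by
          intro k; rw [add_smul, smul_smul]
        rw [Finset.sum_congr rfl (fun k _ => hstep k), Finset.sum_add_distrib, hcs,
          ← Finset.smul_sum, hsum, smul_zero, add_zero]
    -- both sides property
    have hsides : ∀ a, w a ≠ 0 →
        (∃ e, 0 < det2 (w a) (w e)) ∧ (∃ f, det2 (w a) (w f) < 0) := by
      intro a hwa
      constructor
      · obtain ⟨d, hd0, hdx⟩ := hpos (rot2 (w a))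
        have hsum2 : det2 (w a) (rot2 (w a)) = ∑ j, d j * det2 (w a) (w j) := by
          rw [hdx, det2_sum_right]
          exact Finset.sum_congr rfl (fun j _ => det2_smul_right _ _ _)
        have hppos : 0 < ∑ j, d j * det2 (w a) (w j) := by
          rw [← hsum2, det2_rot2_self]; exact dot2_self_pos hwa
        by_contra hno
        push_neg at hno
        have : ∑ j, d j * det2 (w a) (w j) ≤ 0 := by
          apply Finset.sum_nonpos
          intro j _
          exact mul_nonpos_of_nonneg_of_nonpos (hd0 j) (hno j)
        linarith
      · obtain ⟨d, hd0, hdx⟩ := hpos (-rot2 (w a))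
        have hsum2 : det2 (w a) (-rot2 (w a)) = ∑ j, d j * det2 (w a) (w j) := by
          rw [hdx, det2_sum_right]
          exact Finset.sum_congr rfl (fun j _ => det2_smul_right _ _ _)
        have hpneg : ∑ j, d j * det2 (w a) (w j) < 0 := by
          rw [← hsum2, det2_neg_right, det2_rot2_self]
          simpa using dot2_self_pos hwa
        by_contra hno
        push_neg at hno
        have : 0 ≤ ∑ j, d j * det2 (w a) (w j) := by
          apply Finset.sum_nonneg
          intro j _
          exact mul_nonneg (hd0 j) (hno j)
        linarith
    -- build a nonneg rational spanning oracle
    have hpos' : ∀ x : ℚ × ℚ, ∃ d : Fin n → ℚ, (∀ j, 0 ≤ d j) ∧ x = ∑ j, d j • w' j := by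
      by_cases hanti : ∃ s t, det2 (w s) (w t) = 0 ∧ dot2 (w s) (w t) < 0
      · obtain ⟨s, t, hdst, hdotst⟩ := hanti
        have hws : w s ≠ 0 := by
          intro h; rw [h, dot2_zero_left] at hdotst; exact absurd hdotst (lt_irrefl _)
        have hw's : w' s ≠ 0 := hzne s hws
        have hdst' : det2 (w' s) (w' t) = 0 := sgn_zero_transfer (H1 s t) hdst
        have hdotst' : dot2 (w' s) (w' t) < 0 := sgn_neg_transfer (H2 s t hdst) hdotst
        set lam : ℚ := dot2 (w' s) (w' t) / dot2 (w' s) (w' s) with hlam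
        have hlamneg : lam < 0 := div_neg_of_neg_of_pos hdotst' (dot2_self_pos hw's)
        have hwt' : w' t = lam • w' s := collin_rep hdst' hw's
        obtain ⟨⟨e, he⟩, ⟨f, hf⟩⟩ := hsides s hws
        have he' : 0 < det2 (w' s) (w' e) := sgn_pos_transfer (H1 s e) he
        have hf' : det2 (w' s) (w' f) < 0 := sgn_neg_transfer (H1 s f) hf
        exact fun x => pair_span w' s t e f lam hw's hlamneg hwt' he' hf' x
      · push_neg at hanti
        obtain ⟨⟨e1, he1⟩, -⟩ := hsides s0 hws0
        set H : Finset (Fin n) := Finset.univ.filter (fun j => 0 < det2 (w s0) (w j)) with hH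
        have hHne : H.Nonempty := ⟨e1, by rw [hH, Finset.mem_filter]; exact ⟨Finset.mem_univ _, he1⟩⟩
        obtain ⟨es, hesH, hmin⟩ := H.exists_min_image
          (fun j => dot2 (w s0) (w j) / det2 (w s0) (w j)) hHne
        have hes_pos : 0 < det2 (w s0) (w es) := by
          rw [hH, Finset.mem_filter] at hesH; exact hesH.2
        have haa : 0 < dot2 (w s0) (w s0) := dot2_self_pos hws0
        have hmax : ∀ e' ∈ H, det2 (w es) (w e') ≤ 0 := by
          intro e' he'
          have h1 : 0 < det2 (w s0) (w e') := by
            rw [hH, Finset.mem_filter] at he'; exact he'.2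
          have h2 := hmin e' he'
          have h3 : dot2 (w s0) (w es) * det2 (w s0) (w e') ≤
              dot2 (w s0) (w e') * det2 (w s0) (w es) :=
            (div_le_div_iff₀ hes_pos h1).1 h2
          have h4 := e_ident (w s0) (w es) (w e')
          nlinarith
        have hwes : w es ≠ 0 := by
          intro h; rw [h, det2_zero_right] at hes_pos; exact absurd hes_pos (lt_irrefl _)
        obtain ⟨⟨g, hg⟩, -⟩ := hsides es hwes
        have hag : det2 (w s0) (w g) < 0 := by
          rcases lt_trichotomy (det2 (w s0) (w g)) 0 with h|h|h
          · exact h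
          · exfalso
            have hdotg : 0 ≤ dot2 (w s0) (w g) := hanti s0 g h
            rcases hdotg.lt_or_eq with hd'|hd'
            · have hrepg : w g = (dot2 (w s0) (w g) / dot2 (w s0) (w s0)) • w s0 :=
                collin_rep h hws0
              have : det2 (w es) (w g) =
                  (dot2 (w s0) (w g) / dot2 (w s0) (w s0)) * det2 (w es) (w s0) := by
                conv_lhs => rw [hrepg, det2_smul_right]
              rw [this] at hg
              have hc : 0 < dot2 (w s0) (w g) / dot2 (w s0) (w s0) := div_pos hd' haa
              have : det2 (w es) (w s0) < 0 := by
                rw [det2_swap]; simpa using hes_pos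
              nlinarith
            · have hrepg : w g = (dot2 (w s0) (w g) / dot2 (w s0) (w s0)) • w s0 :=
                collin_rep h hws0
              rw [← hd', zero_div, zero_smul] at hrepg
              rw [hrepg, det2_zero_right] at hg
              exact absurd hg (lt_irrefl _)
          · have : g ∈ H := by rw [hH, Finset.mem_filter]; exact ⟨Finset.mem_univ _, h⟩
            exact absurd hg (not_lt.2 (hmax g this))
        have d1' : 0 < det2 (w' s0) (w' es) := sgn_pos_transfer (H1 s0 es) hes_pos
        have d2' : 0 < det2 (w' es) (w' g) := sgn_pos_transfer (H1 es g) hg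
        have d3' : 0 < det2 (w' g) (w' s0) := by
          apply sgn_pos_transfer (H1 g s0)
          rw [det2_swap]; simpa using hag
        exact fun x => tri_span w' s0 es g d1' d2' d3' x
    -- conclude
    obtain ⟨d, hd0, hdx⟩ := hpos' (-∑ j, w' j)
    refine ⟨fun j => 1 + d j, ?_, ?_⟩
    · intro j
      have := hd0 j
      show 0 < 1 + d j
      linarith
    · have hstep : ∀ k : Fin n, (1 + d k) • w' k = w' k + d k • w' k := by
        intro k; rw [add_smul, one_smul]
      rw [Finset.sum_congr rfl (fun k _ => hstep k), Finset.sum_add_distrib, ← hdx,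
        add_neg_cancel]
  · -- all vectors pairwise parallel
    push_neg at hC
    by_cases hA : ∀ j, w j = 0
    · refine ⟨fun _ => 1, fun j => one_pos, ?_⟩
      apply Finset.sum_eq_zero
      intro j _
      rw [hz j (hA j), smul_zero]
    · push_neg at hA
      obtain ⟨j0, hj0⟩ := hA
      have hj0' : w' j0 ≠ 0 := hzne j0 hj0
      have hpp : 0 < dot2 (w j0) (w j0) := dot2_self_pos hj0
      have hpp' : 0 < dot2 (w' j0) (w' j0) := dot2_self_pos hj0'
      set lamr : Fin n → ℝ := fun j => dot2 (w j0) (w j) / dot2 (w j0) (w j0) with hlamr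
      set lamq : Fin n → ℚ := fun j => dot2 (w' j0) (w' j) / dot2 (w' j0) (w' j0) with hlamq
      have hrepr : ∀ j, w j = lamr j • w j0 := fun j => collin_rep (hC j0 j) hj0
      have hrepq : ∀ j, w' j = lamq j • w' j0 := by
        intro j
        exact collin_rep (sgn_zero_transfer (H1 j0 j) (hC j0 j)) hj0'
      have hsgn : ∀ j, SignType.sign (lamr j) = SignType.sign (lamq j) := by
        intro j
        rw [hlamr, hlamq]
        dsimp only
        rw [sgn_div_pos hpp, sgn_div_pos hpp']
        exact H2 j0 j (hC j0 j)
      have hsum0 : ∑ j, tc j * lamr j = 0 := by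
        have hstep : ∀ k : Fin n, tc k • w k = (tc k * lamr k) • w j0 := by
          intro k; rw [hrepr k, smul_smul]
        rw [Finset.sum_congr rfl (fun k _ => hstep k), ← Finset.sum_smul] at hsum
        rcases smul_eq_zero.1 hsum with h|h
        · exact h
        · exact absurd h hj0
      have hlamr0 : lamr j0 = 1 := by rw [hlamr]; dsimp only; rw [div_self hpp.ne']
      have hlamq0 : lamq j0 = 1 := by rw [hlamq]; dsimp only; rw [div_self hpp'.ne']
      have hneg : ∃ jm, lamr jm < 0 := by
        by_contra hno
        push_neg at hno
        have hall0 := (Finset.sum_eq_zero_iff_of_nonneg (fun j _ =>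
          mul_nonneg (htc j).le (hno j))).1 hsum0
        have := hall0 j0 (Finset.mem_univ j0)
        rw [hlamr0, mul_one] at this
        exact absurd this (htc j0).ne'
      obtain ⟨jm, hjm⟩ := hneg
      have hjm' : lamq jm < 0 := sgn_neg_transfer (hsgn jm) hjm
      set P : ℚ := ∑ j, max (lamq j) 0 with hP
      set N : ℚ := ∑ j, max (-lamq j) 0 with hN
      have hPpos : 0 < P := by
        have h1 : (1:ℚ) ≤ P := by
          rw [hP]
          calc (1:ℚ) = max (lamq j0) 0 := by rw [hlamq0]; simp
            _ ≤ ∑ j, max (lamq j) 0 :=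
              Finset.single_le_sum (f := fun j => max (lamq j) 0)
                (fun j _ => le_max_right _ _) (Finset.mem_univ j0)
        linarith
      have hNpos : 0 < N := by
        have h1 : -lamq jm ≤ N := by
          rw [hN]
          calc -lamq jm = max (-lamq jm) 0 := by rw [max_eq_left (by linarith)]
            _ ≤ ∑ j, max (-lamq j) 0 :=
              Finset.single_le_sum (f := fun j => max (-lamq j) 0)
                (fun j _ => le_max_right _ _) (Finset.mem_univ jm)
        linarith
      set t' : Fin n → ℚ := fun j => if 0 < lamq j then N else if lamq j < 0 then P else 1
        with ht'
      have ht'pos : ∀ j, 0 < t' j := by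
        intro j
        rw [ht']
        dsimp only
        split
        · exact hNpos
        · split
          · exact hPpos
          · exact one_pos
      refine ⟨t', ht'pos, ?_⟩
      have hkey : ∀ j, t' j * lamq j = N * max (lamq j) 0 - P * max (-lamq j) 0 := by
        intro j
        rw [ht']
        dsimp only
        rcases lt_trichotomy (lamq j) 0 with h|h|h
        · rw [if_neg (by linarith), if_pos h, max_eq_right h.le, max_eq_left (by linarith)]
          ring
        · rw [h]; simp
        · rw [if_pos h, max_eq_left h.le, max_eq_right (by linarith)]
          ring
      have hstep : ∀ k : Fin n, t' k • w' k = (t' k * lamq k) • w' j0 := by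
        intro k; rw [hrepq k, smul_smul]
      rw [Finset.sum_congr rfl (fun k _ => hstep k), ← Finset.sum_smul]
      have : ∑ j, t' j * lamq j = 0 := by
        rw [Finset.sum_congr rfl (fun j _ => hkey j), Finset.sum_sub_distrib,
          ← Finset.mul_sum, ← Finset.mul_sum, ← hP, ← hN]
        ring
      rw [this, zero_smul]

end lemC3
section final
open SignType Matrix

lemma signtype_cast_eq_zero_r {s : SignType} (h : (s : ℝ) = 0) : s = 0 := by
  cases s <;> simp_all

lemma cond_scale {n : ℕ} {p : Fin n → ℝ × ℝ} {q : Fin n → ℚ × ℚ} (hc : CondRR p q)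
    (c : Fin n → SignType) :
    CondRR (fun j => ((c j : ℝ)) • p j) (fun j => ((c j : ℚ)) • q j) := by
  constructor
  · intro s t
    dsimp only
    rw [det2_smul_left, det2_smul_right, det2_smul_left, det2_smul_right,
      sign_mul, sign_mul, sign_mul, sign_mul, sgn_cast_signType, sgn_cast_signType,
      sgn_cast_signType, sgn_cast_signType, hc.1 s t]
  · intro s t hd
    dsimp only at hd ⊢
    rw [det2_smul_left, det2_smul_right] at hd
    rw [dot2_smul_left, dot2_smul_right, dot2_smul_left, dot2_smul_right,
      sign_mul, sign_mul, sign_mul, sign_mul, sgn_cast_signType, sgn_cast_signType,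
      sgn_cast_signType, sgn_cast_signType]
    rcases mul_eq_zero.1 hd with h|h
    · rw [signtype_cast_eq_zero_r h]
      simp
    rcases mul_eq_zero.1 h with h'|h'
    · rw [signtype_cast_eq_zero_r h']
      simp [mul_comm]
    · rw [hc.2 s t h']

lemma rank_zero_matrix {m n : ℕ} (B : Matrix (Fin m) (Fin n) ℝ) (h : B.rank = 0) : B = 0 := by
  have h2 : LinearMap.range B.mulVecLin = ⊥ := Submodule.finrank_eq_zero.1 h
  rw [LinearMap.range_eq_bot] at h2
  ext i j
  have := congrFun (congrFun (congrArg DFunLike.coe h2) (Pi.single j 1)) i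
  simpa [Matrix.mulVecLin, Matrix.mulVec_single] using this

lemma indep_of_minor {n : ℕ} {x y : Fin n → ℝ} {s t : Fin n}
    (h : x s * y t - x t * y s ≠ 0) : LinearIndependent ℝ ![x, y] := by
  rw [Fintype.linearIndependent_iff]
  intro g hg i
  have hs := congrFun hg s
  have ht := congrFun hg t
  simp only [Fin.sum_univ_two, Matrix.cons_val_zero, Matrix.cons_val_one, Matrix.head_cons,
    Pi.add_apply, Pi.smul_apply, smul_eq_mul, Pi.zero_apply] at hs ht
  have hg0 : g 0 = 0 := by
    have h1 : g 0 * (x s * y t - x t * y s) = 0 := by linear_combination y t * hs - y s * ht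
    rcases mul_eq_zero.1 h1 with h'|h'
    · exact h'
    · exact absurd h' h
  have hg1 : g 1 = 0 := by
    have h1 : g 1 * (x s * y t - x t * y s) = 0 := by linear_combination x s * ht - x t * hs
    rcases mul_eq_zero.1 h1 with h'|h'
    · exact h'
    · exact absurd h' h
  fin_cases i
  · exact hg0
  · exact hg1

theorem stmt_5' {m n : ℕ} (A : Matrix (Fin m) (Fin n) SignType) (h : mr A = n - 2) :
    ∃ B : Matrix (Fin m) (Fin n) ℝ,
      (∀ i j, SignType.sign (B i j) = A i j) ∧ IsRationalMatrix B ∧ B.rank = n - 2 := by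
  classical
  set S : Set ℕ :=
    {r | ∃ B : Matrix (Fin m) (Fin n) ℝ, (∀ i j, SignType.sign (B i j) = A i j) ∧ B.rank = r}
    with hS
  have hSne : S.Nonempty :=
    ⟨(Matrix.of (fun i j => ((A i j : ℝ)))).rank,
      Matrix.of (fun i j => ((A i j : ℝ))), fun i j => sgn_cast_signType (A i j), rfl⟩
  have hinf : sInf S = n - 2 := h
  obtain ⟨B₀, hsgn₀, hrank₀⟩ : (n - 2) ∈ S := by rw [← hinf]; exact Nat.sInf_mem hSne
  by_cases hn2 : n - 2 = 0
  · rw [hn2] at hrank₀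
    have hB0 : B₀ = 0 := rank_zero_matrix B₀ hrank₀
    have hA0 : ∀ i j, A i j = 0 := by
      intro i j
      rw [← hsgn₀ i j, hB0]
      simp
    refine ⟨0, fun i j => by rw [hA0 i j]; simp, fun i j => ⟨0, by simp⟩, ?_⟩
    rw [hn2]
    rw [show (0 : Matrix (Fin m) (Fin n) ℝ).rank =
      Module.finrank ℝ (LinearMap.range (0 : Matrix (Fin m) (Fin n) ℝ).mulVecLin) from rfl]
    rw [Matrix.mulVecLin_zero, LinearMap.range_zero, finrank_bot]
  · -- main case
    have hrn := LinearMap.finrank_range_add_finrank_ker B₀.mulVecLin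
    rw [Module.finrank_fin_fun] at hrn
    have hrB : Module.finrank ℝ (LinearMap.range B₀.mulVecLin) = n - 2 := hrank₀
    have hrankn : B₀.rank ≤ n := B₀.rank_le_width
    have hrBr : B₀.rank = Module.finrank ℝ (LinearMap.range B₀.mulVecLin) := rfl
    have hker : Module.finrank ℝ (LinearMap.ker B₀.mulVecLin) = 2 := by omega
    set b : Module.Basis (Fin 2) ℝ (LinearMap.ker B₀.mulVecLin) :=
      Module.finBasisOfFinrankEq ℝ _ hker with hb
    set u : Fin n → ℝ := ((b 0 : LinearMap.ker B₀.mulVecLin) : Fin n → ℝ) with hu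
    set v : Fin n → ℝ := ((b 1 : LinearMap.ker B₀.mulVecLin) : Fin n → ℝ) with hv
    set p : Fin n → ℝ × ℝ := fun j => (u j, v j) with hp
    have hminor : ∃ s t, det2 (p s) (p t) ≠ 0 := by
      by_contra hno
      push_neg at hno
      have hu0 : u ≠ 0 := by
        intro h0
        apply b.ne_zero 0
        apply Subtype.ext
        rw [ZeroMemClass.coe_zero, ← hu]
        exact h0
      obtain ⟨s, hs⟩ : ∃ s, u s ≠ 0 := by
        by_contra hc
        push_neg at hc
        exact hu0 (funext hc)
      have hvrep : ∀ t, v t = (v s / u s) * u t := by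
        intro t
        have hd := hno s t
        rw [hp] at hd
        simp only [det2] at hd
        rw [div_mul_eq_mul_div, eq_div_iff hs]
        linear_combination hd
      have hdep : (v s / u s) • b 0 + (-1 : ℝ) • b 1 = 0 := by
        apply Subtype.ext
        simp only [Submodule.coe_add, SetLike.val_smul, ZeroMemClass.coe_zero]
        rw [← hu, ← hv]
        funext t
        have hvt := hvrep t
        simp only [Pi.add_apply, Pi.smul_apply, smul_eq_mul, Pi.zero_apply]
        linarith [hvt]
      have hli := Fintype.linearIndependent_iff.1 b.linearIndependent ![v s / u s, -1]
        (by
          rw [Fin.sum_univ_two]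
          simp only [Matrix.cons_val_zero, Matrix.cons_val_one, Matrix.head_cons]
          exact hdep)
      have := hli 1
      simp at this
    obtain ⟨q, hq⟩ := lemA p
    set u' : Fin n → ℝ := fun j => ((q j).1 : ℝ) with hu'
    set v' : Fin n → ℝ := fun j => ((q j).2 : ℝ) with hv'
    have hrow : ∀ i : Fin m,
        ∃ t' : Fin n → ℚ, (∀ j, 0 < t' j) ∧ ∑ j, t' j • (((A i j : ℚ)) • q j) = 0 := by
      intro i
      have hcond := cond_scale hq (fun j => A i j)
      set tR : Fin n → ℝ := fun j => if B₀ i j = 0 then 1 else |B₀ i j| with htR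
      have htRpos : ∀ j, 0 < tR j := by
        intro j
        rw [htR]
        dsimp only
        split
        · exact one_pos
        · exact abs_pos.2 (by assumption)
      have hkeru : B₀.mulVecLin u = 0 := (b 0).2
      have hkerv : B₀.mulVecLin v = 0 := (b 1).2
      have hsum : ∑ j, tR j • (((A i j : ℝ)) • p j) = 0 := by
        have hstep : ∀ j : Fin n, tR j • (((A i j : ℝ)) • p j) = B₀ i j • p j := by
          intro j
          rw [htR]
          dsimp only
          rcases eq_or_ne (B₀ i j) 0 with h0|h0
          · rw [if_pos h0, h0, ← hsgn₀ i j, h0]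
            simp
          · rw [if_neg h0, smul_smul, ← hsgn₀ i j]
            congr 1
            rw [mul_comm]
            exact sign_mul_abs (B₀ i j)
        rw [Finset.sum_congr rfl (fun j _ => hstep j)]
        have h2u : ∑ j, B₀ i j * u j = 0 := by
          have := congrFun hkeru i
          simpa [Matrix.mulVecLin, Matrix.mulVec, dotProduct] using this
        have h2v : ∑ j, B₀ i j * v j = 0 := by
          have := congrFun hkerv i
          simpa [Matrix.mulVecLin, Matrix.mulVec, dotProduct] using this
        apply Prod.ext
        · rw [Prod.fst_sum, Prod.fst_zero]
          calc ∑ j, (B₀ i j • p j).1 = ∑ j, B₀ i j * u j :=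
                Finset.sum_congr rfl (fun j _ => rfl)
            _ = 0 := h2u
        · rw [Prod.snd_sum, Prod.snd_zero]
          calc ∑ j, (B₀ i j • p j).2 = ∑ j, B₀ i j * v j :=
                Finset.sum_congr rfl (fun j _ => rfl)
            _ = 0 := h2v
      exact lemC _ _ hcond.1 hcond.2 tR htRpos hsum
    choose t' ht'pos ht'sum using hrow
    set B' : Matrix (Fin m) (Fin n) ℝ :=
      Matrix.of (fun i j => (((A i j : ℚ) * t' i j : ℚ) : ℝ)) with hB'
    have hB'app : ∀ i j, B' i j = (((A i j : ℚ) * t' i j : ℚ) : ℝ) := fun i j => rfl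
    have hsgn' : ∀ i j, SignType.sign (B' i j) = A i j := by
      intro i j
      rw [hB'app i j, sgn_ratCast, sign_mul, sgn_cast_signType, sign_pos (ht'pos i j), mul_one]
    have hkeru' : B'.mulVecLin u' = 0 := by
      funext i
      have hq0 := ht'sum i
      have h1 := congrArg Prod.fst hq0
      rw [Prod.fst_sum, Prod.fst_zero] at h1
      simp only [Prod.smul_fst, smul_eq_mul] at h1
      have h4 : ∑ j, (A i j : ℚ) * t' i j * (q j).1 = 0 := by
        calc ∑ j, (A i j : ℚ) * t' i j * (q j).1
            = ∑ j, t' i j * ((A i j : ℚ) * (q j).1) := Finset.sum_congr rfl (fun j _ => by ring)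
          _ = 0 := h1
      have h3 : B'.mulVecLin u' i = (((∑ j, (A i j : ℚ) * t' i j * (q j).1) : ℚ) : ℝ) := by
        show ∑ j, B' i j * u' j = _
        push_cast
        apply Finset.sum_congr rfl
        intro j _
        rw [hB'app i j, hu']
        push_cast
        ring
      rw [Pi.zero_apply, h3, h4]
      norm_num
    have hkerv' : B'.mulVecLin v' = 0 := by
      funext i
      have hq0 := ht'sum i
      have h1 := congrArg Prod.snd hq0
      rw [Prod.snd_sum, Prod.snd_zero] at h1
      simp only [Prod.smul_snd, smul_eq_mul] at h1
      have h4 : ∑ j, (A i j : ℚ) * t' i j * (q j).2 = 0 := by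
        calc ∑ j, (A i j : ℚ) * t' i j * (q j).2
            = ∑ j, t' i j * ((A i j : ℚ) * (q j).2) := Finset.sum_congr rfl (fun j _ => by ring)
          _ = 0 := h1
      have h3 : B'.mulVecLin v' i = (((∑ j, (A i j : ℚ) * t' i j * (q j).2) : ℚ) : ℝ) := by
        show ∑ j, B' i j * v' j = _
        push_cast
        apply Finset.sum_congr rfl
        intro j _
        rw [hB'app i j, hv']
        push_cast
        ring
      rw [Pi.zero_apply, h3, h4]
      norm_num
    obtain ⟨s, t, hst⟩ := hminor
    have hst' : det2 (q s) (q t) ≠ 0 := by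
      intro h0
      exact hst (sgn_zero_transfer (hq.1 s t).symm h0)
    have hdet_real : u' s * v' t - u' t * v' s ≠ 0 := by
      intro h0
      apply hst'
      have hcast : ((det2 (q s) (q t) : ℚ) : ℝ) = 0 := by
        rw [show (det2 (q s) (q t) : ℚ) = (q s).1 * (q t).2 - (q s).2 * (q t).1 from rfl]
        push_cast
        rw [hu', hv'] at h0
        linear_combination h0
      exact_mod_cast hcast
    have hindep : LinearIndependent ℝ ![u', v'] := indep_of_minor hdet_real
    have hspan : Submodule.span ℝ (Set.range ![u', v']) ≤ LinearMap.ker B'.mulVecLin := by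
      rw [Submodule.span_le]
      rintro x ⟨i, rfl⟩
      fin_cases i
      · simp only [Matrix.cons_val_zero, SetLike.mem_coe, LinearMap.mem_ker]
        exact hkeru'
      · simp only [Matrix.cons_val_one, Matrix.head_cons, SetLike.mem_coe, LinearMap.mem_ker]
        exact hkerv'
    have hfr : Module.finrank ℝ (Submodule.span ℝ (Set.range ![u', v'])) = 2 := by
      rw [finrank_span_eq_card hindep]
      simp
    have hker2 : 2 ≤ Module.finrank ℝ (LinearMap.ker B'.mulVecLin) := by
      rw [← hfr]
      exact Submodule.finrank_mono hspan
    have hrn' := LinearMap.finrank_range_add_finrank_ker B'.mulVecLin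
    rw [Module.finrank_fin_fun] at hrn'
    have hrBr' : B'.rank = Module.finrank ℝ (LinearMap.range B'.mulVecLin) := rfl
    have hrge : n - 2 ≤ B'.rank := by
      have hmem : B'.rank ∈ S := ⟨B', hsgn', rfl⟩
      have hle := Nat.sInf_le hmem
      omega
    refine ⟨B', hsgn', fun i j => ⟨(A i j : ℚ) * t' i j, rfl⟩, ?_⟩
    omega

end final

end SP


theorem stmt_5 {m n : ℕ} (A : Matrix (Fin m) (Fin n) SignType) (h : mr A = n - 2) :
    ∃ B : Matrix (Fin m) (Fin n) ℝ,
      (∀ i j, SignType.sign (B i j) = A i j) ∧ IsRationalMatrix B ∧ B.rank = n - 2 := by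
  exact SP.stmt_5' A h
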